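/- Let Z be a metric space with an isometric action of a group H, and let A ⊆ Z be an H-invariant subspace. For ∅ ≠ U ⊊ A define Z(U) := {z ∈ Z : d(z,U) < d(z, A\U)}, and Z(A) := Z, Z(∅) := ∅. Then for all U, V ⊆ A: (1) Z(U) is open in Z; (2) Z(U ∩ V) = Z(U) ∩ Z(V); (3) Z(U) ∩ A = U if and only if U is open in A; (4) Z(gU) = g·Z(U) for all g ∈ H. -/
import Mathlib


open Metric Set

attribute [local instance] Classical.propDecidable

/-- The extension `Z(U)` of a subset `U` of `A` to an open subset of `Z`:
`Z(∅) = ∅`, `Z(A) = Z`, and otherwise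
`Z(U) = {z | d(z,U) < d(z, A \ U)}`. -/
noncomputable def extSet {Z : Type*} [MetricSpace Z] (A U : Set Z) : Set Z :=
  if U = ∅ then ∅
  else if U = A then Set.univ
  else {z : Z | Metric.infDist z U < Metric.infDist z (A \ U)}

private lemma le_infDist_aux {Z : Type*} [MetricSpace Z] {s : Set Z} {x : Z} {b : ℝ}
    (hs : s.Nonempty) (h : ∀ y ∈ s, b ≤ dist x y) : b ≤ infDist x s := by
  by_contra hlt
  push_neg at hlt
  obtain ⟨y, hy, hd⟩ := (infDist_lt_iff hs).1 hlt
  exact absurd (h y hy) (not_le.2 hd)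

private lemma ext_key {Z : Type*} [MetricSpace Z] {A U V : Set Z} {z : Z}
    (hUA : U ⊆ A) (_hVA : V ⊆ A) (hUne : U.Nonempty)
    (hAV : (A \ V).Nonempty)
    (h1 : infDist z U < infDist z (A \ U)) (h2 : infDist z V < infDist z (A \ V))
    (hle : infDist z (A \ U) ≤ infDist z (A \ V)) :
    infDist z (U ∩ V) < infDist z (A \ (U ∩ V)) := by
  obtain ⟨u, huU, hud⟩ := (infDist_lt_iff hUne).1 h1
  have huV : u ∈ V := by
    by_contra huV
    have : infDist z (A \ V) ≤ dist z u := infDist_le_dist_of_mem ⟨hUA huU, huV⟩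
    linarith
  have hne : (A \ (U ∩ V)).Nonempty :=
    hAV.mono (diff_subset_diff_right inter_subset_right)
  have hlow : infDist z (A \ U) ≤ infDist z (A \ (U ∩ V)) := by
    refine le_infDist_aux hne fun y hy => ?_
    rcases not_and_or.1 hy.2 with hyU | hyV
    · exact infDist_le_dist_of_mem ⟨hy.1, hyU⟩
    · exact hle.trans (infDist_le_dist_of_mem ⟨hy.1, hyV⟩)
  calc infDist z (U ∩ V) ≤ dist z u := infDist_le_dist_of_mem ⟨huU, huV⟩
    _ < infDist z (A \ U) := hud
    _ ≤ _ := hlow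

/-- Properties of the extension `U ↦ Z(U)`: each `Z(U)` is open,
`Z(U ∩ V) = Z(U) ∩ Z(V)`, `Z(U) ∩ A = U` iff `U` is open in `A`, and
`Z(gU) = g·Z(U)` for an isometric action leaving `A` invariant. -/
theorem extSet_properties {Z H : Type*} [MetricSpace Z] [Group H] [MulAction H Z]
    (hiso : ∀ h : H, Isometry (fun w : Z => h • w))
    (A : Set Z) (hA : ∀ h : H, (fun w => h • w) '' A = A) :
    (∀ U : Set Z, U ⊆ A → IsOpen (extSet A U)) ∧
    (∀ U V : Set Z, U ⊆ A → V ⊆ A →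
      extSet A (U ∩ V) = extSet A U ∩ extSet A V) ∧
    (∀ U : Set Z, U ⊆ A →
      (extSet A U ∩ A = U ↔ ∃ O : Set Z, IsOpen O ∧ U = O ∩ A)) ∧
    (∀ U : Set Z, U ⊆ A → ∀ h : H,
      extSet A ((fun w => h • w) '' U) = (fun w => h • w) '' extSet A U) := by
  have open1 : ∀ U : Set Z, U ⊆ A → IsOpen (extSet A U) := by
    intro U _
    unfold extSet
    split_ifs with h1 h2
    · exact isOpen_empty
    · exact isOpen_univ
    · exact isOpen_lt (continuous_infDist_pt U) (continuous_infDist_pt (A \ U))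
  refine ⟨open1, ?_, ?_, ?_⟩
  · -- part 2
    intro U V hU hV
    by_cases hUe : U = ∅
    · simp [extSet, hUe]
    by_cases hVe : V = ∅
    · simp [extSet, hVe]
    by_cases hUA : U = A
    · subst hUA
      rw [inter_eq_right.2 hV]
      have : extSet U U = univ := by simp [extSet, hUe]
      rw [this, univ_inter]
    by_cases hVA : V = A
    · subst hVA
      rw [inter_eq_left.2 hU]
      have : extSet V V = univ := by simp [extSet, hVe]
      rw [this, inter_univ]
    -- U, V nonempty proper subsets of A
    have hUne : U.Nonempty := nonempty_iff_ne_empty.2 hUe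
    have hVne : V.Nonempty := nonempty_iff_ne_empty.2 hVe
    have hAUne : (A \ U).Nonempty := diff_nonempty.2 fun h => hUA (hU.antisymm h)
    have hAVne : (A \ V).Nonempty := diff_nonempty.2 fun h => hVA (hV.antisymm h)
    have hextU : extSet A U = {z : Z | infDist z U < infDist z (A \ U)} := by
      simp [extSet, hUe, hUA]
    have hextV : extSet A V = {z : Z | infDist z V < infDist z (A \ V)} := by
      simp [extSet, hVe, hVA]
    by_cases hIe : U ∩ V = ∅
    · have : extSet A (U ∩ V) = ∅ := by simp [extSet, hIe]
      rw [this, hextU, hextV]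
      symm
      rw [eq_empty_iff_forall_notMem]
      rintro z ⟨hz1, hz2⟩
      simp only [mem_setOf_eq] at hz1 hz2
      have hVsub : V ⊆ A \ U := fun v hv =>
        ⟨hV hv, fun hvU => (eq_empty_iff_forall_notMem.1 hIe v) ⟨hvU, hv⟩⟩
      have hUsub : U ⊆ A \ V := fun u hu =>
        ⟨hU hu, fun huV => (eq_empty_iff_forall_notMem.1 hIe u) ⟨hu, huV⟩⟩
      have h1 : infDist z (A \ U) ≤ infDist z V := infDist_le_infDist_of_subset hVsub hVne
      have h2 : infDist z (A \ V) ≤ infDist z U := infDist_le_infDist_of_subset hUsub hUne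
      linarith
    · have hIA : U ∩ V ≠ A := by
        intro hc
        exact hUA (hU.antisymm (hc ▸ inter_subset_left))
      have hIne : (U ∩ V).Nonempty := nonempty_iff_ne_empty.2 hIe
      have hextI : extSet A (U ∩ V) = {z : Z | infDist z (U ∩ V) < infDist z (A \ (U ∩ V))} := by
        simp [extSet, hIe, hIA]
      rw [hextI, hextU, hextV]
      ext z
      simp only [mem_setOf_eq, mem_inter_iff]
      constructor
      · intro hz
        have hsubU : A \ U ⊆ A \ (U ∩ V) := diff_subset_diff_right inter_subset_left
        have hsubV : A \ V ⊆ A \ (U ∩ V) := diff_subset_diff_right inter_subset_right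
        have hU' : infDist z U ≤ infDist z (U ∩ V) :=
          infDist_le_infDist_of_subset inter_subset_left hIne
        have hV' : infDist z V ≤ infDist z (U ∩ V) :=
          infDist_le_infDist_of_subset inter_subset_right hIne
        have hAU' : infDist z (A \ (U ∩ V)) ≤ infDist z (A \ U) :=
          infDist_le_infDist_of_subset hsubU hAUne
        have hAV' : infDist z (A \ (U ∩ V)) ≤ infDist z (A \ V) :=
          infDist_le_infDist_of_subset hsubV hAVne
        exact ⟨by linarith, by linarith⟩
      · rintro ⟨h1, h2⟩
        rcases le_total (infDist z (A \ U)) (infDist z (A \ V)) with hle | hle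
        · exact ext_key hU hV hUne hAVne h1 h2 hle
        · have := ext_key hV hU hVne hAUne h2 h1 hle
          rwa [inter_comm V U] at this
  · -- part 3
    intro U hU
    constructor
    · intro heq
      exact ⟨extSet A U, open1 U hU, heq.symm⟩
    · rintro ⟨O, hO, hUO⟩
      by_cases hUe : U = ∅
      · simp [extSet, hUe]
      by_cases hUA : U = A
      · subst hUA
        simp [extSet, hUe]
      have hAUne : (A \ U).Nonempty := diff_nonempty.2 fun h => hUA (hU.antisymm h)
      have hext : extSet A U = {z : Z | infDist z U < infDist z (A \ U)} := by
        simp [extSet, hUe, hUA]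
      rw [hext]
      apply subset_antisymm
      · rintro z ⟨hz1, hz2⟩
        simp only [mem_setOf_eq] at hz1
        by_contra hzU
        have h0 : infDist z (A \ U) = 0 := infDist_zero_of_mem ⟨hz2, hzU⟩
        have h1 : (0:ℝ) ≤ infDist z U := infDist_nonneg
        linarith
      · intro u hu
        refine ⟨?_, hU hu⟩
        have huO : u ∈ O := by
          have : u ∈ O ∩ A := hUO ▸ hu
          exact this.1
        obtain ⟨r, hr, hball⟩ := Metric.isOpen_iff.1 hO u huO
        have h0 : infDist u U = 0 := infDist_zero_of_mem hu
        have hle : r ≤ infDist u (A \ U) := by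
          refine le_infDist_aux hAUne fun y hy => ?_
          by_contra hlt
          push_neg at hlt
          have hyO : y ∈ O := hball (Metric.mem_ball'.mpr hlt)
          have : y ∈ U := by rw [hUO]; exact ⟨hyO, hy.1⟩
          exact hy.2 this
        simp only [mem_setOf_eq, h0]
        linarith
  · -- part 4
    intro U hU h
    have hinj : Function.Injective (fun w : Z => h • w) := MulAction.injective h
    by_cases hUe : U = ∅
    · simp [extSet, hUe]
    by_cases hUA : U = A
    · subst hUA
      rw [hA h]
      have h1 : extSet U U = univ := by simp [extSet, hUe]
      rw [h1, image_univ]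
      exact ((MulAction.surjective (β := Z) h).range_eq).symm
    have hIe : (fun w : Z => h • w) '' U ≠ ∅ := by
      simp [image_eq_empty, hUe]
    have hIA : (fun w : Z => h • w) '' U ≠ A := by
      intro hcontra
      apply hUA
      have := hcontra.trans (hA h).symm
      exact (Set.image_injective.2 hinj) this
    have hext : extSet A ((fun w : Z => h • w) '' U)
        = {z : Z | infDist z ((fun w : Z => h • w) '' U)
            < infDist z (A \ (fun w : Z => h • w) '' U)} := by
      simp only [extSet, if_neg hIe, if_neg hIA]
    have hextU : extSet A U = {z : Z | infDist z U < infDist z (A \ U)} := by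
      simp [extSet, hUe, hUA]
    rw [hext, hextU]
    have hdiff : A \ (fun w : Z => h • w) '' U = (fun w : Z => h • w) '' (A \ U) := by
      rw [Set.image_diff hinj, hA h]
    rw [hdiff]
    ext z
    simp only [mem_setOf_eq, Set.mem_image]
    have hz : z = h • (h⁻¹ • z) := (smul_inv_smul h z).symm
    have e1 : infDist z ((fun w : Z => h • w) '' U) = infDist (h⁻¹ • z) U := by
      conv_lhs => rw [hz]
      exact infDist_image (hiso h)
    have e2 : infDist z ((fun w : Z => h • w) '' (A \ U)) = infDist (h⁻¹ • z) (A \ U) := by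
      conv_lhs => rw [hz]
      exact infDist_image (hiso h)
    rw [e1, e2]
    constructor
    · intro hlt
      exact ⟨h⁻¹ • z, hlt, smul_inv_smul h z⟩
    · rintro ⟨w, hw, rfl⟩
      rwa [inv_smul_smul]
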